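/- Let A ∈ T_{p,n} (p ≥ 2) be nonsingular, and let λ(A) > 0 be the minimum of ‖A x^{p-1}‖² over the unit sphere {x : ‖x‖ = 1}. Let B ∈ T_{p,n} satisfy ‖B‖_Frob < √(λ(A)), let b ∈ ℝⁿ and σ ≥ 0. Then every x ∈ ℝⁿ with ‖A x^{p-1} + B |x|^{p-1} − b‖ ≤ σ satisfies ‖x‖ ≤ (σ + ‖b‖)^{1/(p-1)} / (λ(A)^{1/(2(p-1))} − ‖B‖_Frob^{1/(p-1)}). -/

import Mathlib

/-- `(A x^{k})_i = Σ_{j : Fin k → Fin n} a_{i j₁ … j_k} x_{j₁} ⋯ x_{j_k}` :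
the tensor-vector product of a tensor of order `k+1` with `x`, `k` times. -/
noncomputable def tvec {n k : ℕ} (A : Fin n → (Fin k → Fin n) → ℝ) (x : Fin n → ℝ) :
    Fin n → ℝ :=
  fun i => ∑ j : Fin k → Fin n, A i j * ∏ l, x (j l)

/-- The Euclidean norm of a vector in `ℝⁿ`. -/
noncomputable def euclNorm {n : ℕ} (x : Fin n → ℝ) : ℝ :=
  Real.sqrt (∑ i, x i ^ 2)

/-- The Frobenius norm of a tensor in `T_{k+1,n}`. -/
noncomputable def frob {n k : ℕ} (A : Fin n → (Fin k → Fin n) → ℝ) : ℝ :=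
  Real.sqrt (∑ i, ∑ j : Fin k → Fin n, A i j ^ 2)

lemma euclNorm_nonneg' {n : ℕ} (x : Fin n → ℝ) : 0 ≤ euclNorm x := Real.sqrt_nonneg _

lemma sq_euclNorm {n : ℕ} (x : Fin n → ℝ) : euclNorm x ^ 2 = ∑ i, x i ^ 2 :=
  Real.sq_sqrt (Finset.sum_nonneg fun _ _ => sq_nonneg _)

lemma euclNorm_eq_norm {n : ℕ} (x : Fin n → ℝ) :
    euclNorm x = ‖(WithLp.equiv 2 (Fin n → ℝ)).symm x‖ := by
  rw [EuclideanSpace.norm_eq]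
  simp [euclNorm, Real.norm_eq_abs, sq_abs]

lemma euclNorm_add_le {n : ℕ} (u v : Fin n → ℝ) :
    euclNorm (fun i => u i + v i) ≤ euclNorm u + euclNorm v := by
  rw [euclNorm_eq_norm, euclNorm_eq_norm, euclNorm_eq_norm]
  exact norm_add_le ((WithLp.equiv 2 (Fin n → ℝ)).symm u) ((WithLp.equiv 2 (Fin n → ℝ)).symm v)

lemma euclNorm_neg' {n : ℕ} (v : Fin n → ℝ) : euclNorm (fun i => -(v i)) = euclNorm v := by
  simp [euclNorm, neg_sq]

lemma tvec_smul {n k : ℕ} (A : Fin n → (Fin k → Fin n) → ℝ) (c : ℝ) (x : Fin n → ℝ)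
    (i : Fin n) : tvec A (fun i => c * x i) i = c ^ k * tvec A x i := by
  unfold tvec
  rw [Finset.mul_sum]
  refine Finset.sum_congr rfl fun j _ => ?_
  rw [Finset.prod_mul_distrib, Finset.prod_const, Finset.card_univ, Fintype.card_fin]
  ring

lemma sum_prod_sq {n k : ℕ} (y : Fin n → ℝ) :
    ∑ j : Fin k → Fin n, ∏ l, y (j l) ^ 2 = (∑ i, y i ^ 2) ^ k := by
  have h : (∑ i, y i ^ 2) ^ k = ∏ _l : Fin k, ∑ i, y i ^ 2 := by
    rw [Finset.prod_const, Finset.card_univ, Fintype.card_fin]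
  rw [h, Finset.prod_univ_sum]
  simp

lemma tvec_sq_le {n k : ℕ} (B : Fin n → (Fin k → Fin n) → ℝ) (y : Fin n → ℝ) :
    ∑ i, tvec B y i ^ 2 ≤ (∑ i, ∑ j : Fin k → Fin n, B i j ^ 2) * (∑ i, y i ^ 2) ^ k := by
  rw [Finset.sum_mul]
  refine Finset.sum_le_sum fun i _ => ?_
  calc tvec B y i ^ 2
      ≤ (∑ j : Fin k → Fin n, B i j ^ 2) * ∑ j : Fin k → Fin n, (∏ l, y (j l)) ^ 2 :=
        Finset.sum_mul_sq_le_sq_mul_sq _ _ _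
    _ = (∑ j : Fin k → Fin n, B i j ^ 2) * (∑ i, y i ^ 2) ^ k := by
        rw [show (∑ j : Fin k → Fin n, (∏ l, y (j l)) ^ 2)
            = ∑ j : Fin k → Fin n, ∏ l, y (j l) ^ 2 from
          Finset.sum_congr rfl fun j _ => (Finset.prod_pow _ _ _).symm, sum_prod_sq]

lemma lam_bound {n k : ℕ} (hk : 0 < k) (A : Fin n → (Fin k → Fin n) → ℝ) (lam : ℝ)
    (hl0 : 0 ≤ lam)
    (hlam : ∀ u : Fin n → ℝ, (∑ i, u i ^ 2) = 1 → lam ≤ ∑ i, tvec A u i ^ 2)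
    (x : Fin n → ℝ) :
    lam * (∑ i, x i ^ 2) ^ k ≤ ∑ i, tvec A x i ^ 2 := by
  have hS0 : 0 ≤ ∑ i, x i ^ 2 := Finset.sum_nonneg fun _ _ => sq_nonneg _
  rcases eq_or_lt_of_le hS0 with h | h
  · rw [← h, zero_pow hk.ne', mul_zero]
    exact Finset.sum_nonneg fun _ _ => sq_nonneg _
  · set t := Real.sqrt (∑ i, x i ^ 2) with htdef
    have ht : 0 < t := Real.sqrt_pos.mpr h
    have ht2 : t ^ 2 = ∑ i, x i ^ 2 := Real.sq_sqrt hS0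
    set u : Fin n → ℝ := fun i => x i / t with hu
    have hxu : x = fun i => t * u i := by
      funext i; simp only [hu]; field_simp
    have hu1 : (∑ i, u i ^ 2) = 1 := by
      simp only [hu, div_pow, ← Finset.sum_div, ht2]
      exact div_self h.ne'
    have h1 := hlam u hu1
    have h2 : ∀ i, tvec A x i = t ^ k * tvec A u i := by
      intro i
      conv_lhs => rw [hxu]
      exact tvec_smul A t u i
    calc lam * (∑ i, x i ^ 2) ^ k = (t ^ k) ^ 2 * lam := by
          rw [← ht2, ← pow_mul, ← pow_mul]; ring
      _ ≤ (t ^ k) ^ 2 * ∑ i, tvec A u i ^ 2 := by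
          exact mul_le_mul_of_nonneg_left h1 (sq_nonneg _)
      _ = ∑ i, tvec A x i ^ 2 := by
          rw [Finset.mul_sum]
          exact Finset.sum_congr rfl fun i _ => by rw [h2 i]; ring

/-- Let `A ∈ T_{p,n}` be nonsingular with `λ(A) > 0` the minimum of `‖A x^{p-1}‖²` over
the unit sphere, and let `‖B‖_F < √(λ(A))`.  Then every `x` in the level set
`L_σ = {x : ‖A x^{p-1} + B|x|^{p-1} − b‖ ≤ σ}` satisfies
`‖x‖ ≤ (σ + ‖b‖)^{1/(p-1)} / (λ(A)^{1/(2(p-1))} − ‖B‖_F^{1/(p-1)})`. -/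
theorem bound_on_level_set {p n : ℕ} (hp : 2 ≤ p)
    (A B : Fin n → (Fin (p - 1) → Fin n) → ℝ)
    (hA : ∀ x : Fin n → ℝ, tvec A x = 0 → x = 0)
    (lam : ℝ) (hlam_pos : 0 < lam)
    (hlam : IsLeast {r : ℝ | ∃ x : Fin n → ℝ,
      (∑ i, x i ^ 2) = 1 ∧ r = ∑ i, tvec A x i ^ 2} lam)
    (hB : frob B < Real.sqrt lam)
    (b : Fin n → ℝ) (σ : ℝ) (hσ : 0 ≤ σ) (x : Fin n → ℝ)
    (hx : euclNorm (fun i => tvec A x i + tvec B (fun j => |x j|) i - b i) ≤ σ) :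
    euclNorm x ≤ (σ + euclNorm b) ^ ((1 : ℝ) / (p - 1)) /
      (lam ^ ((1 : ℝ) / (2 * (p - 1))) - frob B ^ ((1 : ℝ) / (p - 1))) := by
  have hk : 0 < p - 1 := by omega
  have hpk : ((p : ℝ) - 1) = ((p - 1 : ℕ) : ℝ) := by
    push_cast [Nat.cast_sub (by omega : 1 ≤ p)]; ring
  have hkR : (0 : ℝ) < ((p - 1 : ℕ) : ℝ) := by exact_mod_cast hk
  set a := Real.sqrt lam with hadef
  have ha : 0 < a := Real.sqrt_pos.mpr hlam_pos
  have ha2 : a ^ 2 = lam := Real.sq_sqrt hlam_pos.le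
  set c := frob B with hcdef
  have hc0 : 0 ≤ c := Real.sqrt_nonneg _
  have hca : c < a := hB
  set t := euclNorm x with htdef
  have ht0 : 0 ≤ t := euclNorm_nonneg' x
  have ht2 : t ^ 2 = ∑ i, x i ^ 2 := sq_euclNorm x
  set y : Fin n → ℝ := fun j => |x j| with hydef
  have hy2 : (∑ i, y i ^ 2) = ∑ i, x i ^ 2 := by
    refine Finset.sum_congr rfl fun i _ => ?_; simp [hydef, sq_abs]
  -- Step A : a * t^k ≤ euclNorm (tvec A x)
  have hAx2 : lam * (∑ i, x i ^ 2) ^ (p - 1) ≤ ∑ i, tvec A x i ^ 2 :=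
    lam_bound hk A lam hlam_pos.le (fun u hu => hlam.2 ⟨u, hu, rfl⟩) x
  have stepA : a * t ^ (p - 1) ≤ euclNorm (tvec A x) := by
    have h1 : (a * t ^ (p - 1)) ^ 2 ≤ euclNorm (tvec A x) ^ 2 := by
      rw [sq_euclNorm, mul_pow, ha2, ← pow_mul, mul_comm (p - 1) 2, pow_mul, ht2]
      exact hAx2
    nlinarith [euclNorm_nonneg' (tvec A x), mul_nonneg ha.le (pow_nonneg ht0 (p - 1))]
  -- Step B : euclNorm (tvec B y) ≤ c * t^k
  have hB2 : ∑ i, tvec B y i ^ 2 ≤ c ^ 2 * (t ^ (p - 1)) ^ 2 := by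
    have hc2 : c ^ 2 = ∑ i, ∑ j : Fin (p - 1) → Fin n, B i j ^ 2 :=
      Real.sq_sqrt (Finset.sum_nonneg fun _ _ => Finset.sum_nonneg fun _ _ => sq_nonneg _)
    calc ∑ i, tvec B y i ^ 2
        ≤ (∑ i, ∑ j : Fin (p - 1) → Fin n, B i j ^ 2) * (∑ i, y i ^ 2) ^ (p - 1) := tvec_sq_le B y
      _ = c ^ 2 * (t ^ (p - 1)) ^ 2 := by
          rw [hy2, ← hc2, ← pow_mul, mul_comm (p - 1) 2, pow_mul, ht2]
  have stepB : euclNorm (tvec B y) ≤ c * t ^ (p - 1) := by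
    have h1 : euclNorm (tvec B y) ^ 2 ≤ (c * t ^ (p - 1)) ^ 2 := by
      rw [sq_euclNorm, mul_pow]; exact hB2
    nlinarith [euclNorm_nonneg' (tvec B y), mul_nonneg hc0 (pow_nonneg ht0 (p - 1))]
  -- Step C : triangle inequality
  set w : Fin n → ℝ := fun i => tvec A x i + tvec B y i - b i with hwdef
  have stepC : euclNorm (tvec A x) ≤ euclNorm w + euclNorm (tvec B y) + euclNorm b := by
    have h1 : (fun i => tvec A x i) = fun i => (w i + -(tvec B y i)) + b i := by
      funext i; simp [hwdef]; ring
    have h2 : euclNorm (tvec A x) = euclNorm (fun i => (w i + -(tvec B y i)) + b i) := by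
      rw [show tvec A x = fun i => tvec A x i from rfl, h1]
    rw [h2]
    calc euclNorm (fun i => (w i + -(tvec B y i)) + b i)
        ≤ euclNorm (fun i => w i + -(tvec B y i)) + euclNorm b := euclNorm_add_le _ _
      _ ≤ euclNorm w + euclNorm (fun i => -(tvec B y i)) + euclNorm b := by
          have := euclNorm_add_le w (fun i => -(tvec B y i))
          linarith
      _ = euclNorm w + euclNorm (tvec B y) + euclNorm b := by rw [euclNorm_neg']
  have key : (a - c) * t ^ (p - 1) ≤ σ + euclNorm b := by
    have hw : euclNorm w ≤ σ := hx
    nlinarith [stepA, stepB, stepC]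
  -- Step D : the elementary inequality
  set D := a ^ ((1 : ℝ) / ((p - 1 : ℕ) : ℝ)) - c ^ ((1 : ℝ) / ((p - 1 : ℕ) : ℝ)) with hDdef
  have hrpow_a : (a ^ ((1 : ℝ) / ((p - 1 : ℕ) : ℝ))) ^ (p - 1) = a := by
    rw [← Real.rpow_natCast (a ^ ((1 : ℝ) / ((p - 1 : ℕ) : ℝ))) (p - 1), ← Real.rpow_mul ha.le,
      one_div_mul_cancel hkR.ne', Real.rpow_one]
  have hrpow_c : (c ^ ((1 : ℝ) / ((p - 1 : ℕ) : ℝ))) ^ (p - 1) = c := by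
    rw [← Real.rpow_natCast (c ^ ((1 : ℝ) / ((p - 1 : ℕ) : ℝ))) (p - 1), ← Real.rpow_mul hc0,
      one_div_mul_cancel hkR.ne', Real.rpow_one]
  have hD : 0 < D := by
    rw [hDdef, sub_pos]
    exact Real.rpow_lt_rpow hc0 hca (by positivity)
  have hDk : D ^ (p - 1) ≤ a - c := by
    have h1 : D ^ (p - 1) + (c ^ ((1 : ℝ) / ((p - 1 : ℕ) : ℝ))) ^ (p - 1) ≤ (D + c ^ ((1 : ℝ) / ((p - 1 : ℕ) : ℝ))) ^ (p - 1) :=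
      pow_add_pow_le hD.le (Real.rpow_nonneg hc0 _) hk.ne'
    rw [hDdef, sub_add_cancel, hrpow_a, hrpow_c] at h1
    rw [hDdef]
    linarith [h1, hrpow_c]
  -- Step E/F
  have stepE : (D * t) ^ (p - 1) ≤ σ + euclNorm b := by
    rw [mul_pow]
    calc D ^ (p - 1) * t ^ (p - 1) ≤ (a - c) * t ^ (p - 1) :=
          mul_le_mul_of_nonneg_right hDk (pow_nonneg ht0 (p - 1))
      _ ≤ σ + euclNorm b := key
  have stepF : D * t ≤ (σ + euclNorm b) ^ ((1 : ℝ) / ((p - 1 : ℕ) : ℝ)) := by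
    have h1 := Real.rpow_le_rpow (by positivity) stepE (by positivity : (0:ℝ) ≤ 1 / ((p - 1 : ℕ) : ℝ))
    rwa [← Real.rpow_natCast (D * t) (p - 1), ← Real.rpow_mul (by positivity),
      mul_one_div_cancel hkR.ne', Real.rpow_one] at h1
  -- conclude
  have hden : lam ^ ((1 : ℝ) / (2 * ((p : ℝ) - 1))) - c ^ ((1 : ℝ) / ((p : ℝ) - 1)) = D := by
    rw [hpk, hDdef, hadef, Real.sqrt_eq_rpow, ← Real.rpow_mul hlam_pos.le]
    congr 2
    field_simp
  rw [hpk] at hden ⊢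
  rw [hden, le_div_iff₀ hD]
  linarith [stepF]
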